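/- Let n and m be positive integers with n ≥ m(m+1) and m | n. There exists a set S of n points in ℝ² with distinct first coordinates and distinct pairwise distances, and hyperplanes H_1, …, H_{m+1} at x-coordinates 1, …, m+1 each consecutive pair bounding exactly n/m points of S, such that the (m+1 choose 2) vertical slabs [H_i, H_j] (1 ≤ i < j ≤ m+1) all have pairwise distinct closest pairs; i.e., |A(S, m)| = (m+1 choose 2). -/

import Mathlib

set_option maxHeartbeats 1000000
noncomputable section
namespace S19
abbrev E := EuclideanSpace ℝ (Fin 2)
def pt2 (x y : ℝ) : E := WithLp.toLp 2 ![x, y]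
lemma pt2_0 (x y : ℝ) : pt2 x y 0 = x := rfl
lemma pt2_1 (x y : ℝ) : pt2 x y 1 = y := rfl
lemma pt2_inj {x y x' y' : ℝ} (h : pt2 x y = pt2 x' y') : x = x' ∧ y = y' :=
  ⟨congrArg (fun p : E => p 0) h, congrArg (fun p : E => p 1) h⟩
lemma dist_pt2 (x y x' y' : ℝ) :
    dist (pt2 x y) (pt2 x' y') = Real.sqrt ((x - x')^2 + (y - y')^2) := by
  rw [EuclideanSpace.dist_eq]
  congr 1
  rw [Fin.sum_univ_two]
  simp [pt2, Real.dist_eq, sq_abs]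

lemma nat_abs_ge_one {a b : ℕ} (h : a ≠ b) : (1:ℝ) ≤ |(a:ℝ) - (b:ℝ)| := by
  rcases h.lt_or_gt with hl | hl
  · have : (a:ℝ) + 1 ≤ b := by exact_mod_cast hl
    rw [abs_sub_comm, abs_of_nonneg (by linarith)]; linarith
  · have : (b:ℝ) + 1 ≤ a := by exact_mod_cast hl
    rw [abs_of_nonneg (by linarith)]; linarith

lemma addMul_inj {Q a b a' b' : ℕ} (hQ : 0 < Q) (hb : b < Q) (hb' : b' < Q)
    (h : a*Q+b = a'*Q+b') : a = a' ∧ b = b' := by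
  have e1 : a + b / Q = a' + b' / Q := by
    rw [← Nat.mul_add_div hQ, ← Nat.mul_add_div hQ, mul_comm Q a, mul_comm Q a', h]
  rw [Nat.div_eq_of_lt hb, Nat.div_eq_of_lt hb'] at e1
  obtain rfl : a = a' := by omega
  omega

lemma abs_lower {x y : ℝ} (c : ℝ) (hx : c ≤ |x|) (hy : |y| ≤ c) : c - |y| ≤ |x + y| := by
  have h1 : |x| ≤ |x + y| + |y| := by
    calc |x| = |(x+y) + (-y)| := by ring_nf
    _ ≤ |x+y| + |(-y)| := abs_add_le _ _
    _ = |x+y| + |y| := by rw [abs_neg]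
  linarith

def A (m : ℕ) : ℝ := ((m:ℝ)+2)^2
def T (m : ℕ) : ℝ := ((m:ℝ)+2)^8
def gam (m : ℕ) : ℝ := 1/(2*((m:ℝ)+2)^2)
def eps (m i j : ℕ) : ℝ := ((i*(m+2)+j : ℕ) : ℝ) / (2*((m:ℝ)+2)^2)
def v (m i j : ℕ) : ℝ := A m - ((j:ℝ) - (i:ℝ)) + eps m i j
def isR (m k t : ℕ) : Prop := m ≤ t + k + 1 ∧ t + 2 ≤ m
instance (m k t : ℕ) : Decidable (isR m k t) := instDecidableAnd
def win (m K k t : ℕ) : ℕ := if isR m k t then (t+k+1-m)*K + (m-t-2) else k*K + t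
def sh (m k t : ℕ) : ℝ := if isR m k t then v m (t+k+2-m) (k+2) else 0
def xc (K k t : ℕ) : ℝ := ((k:ℝ)+1) + ((t:ℝ)+1)/((K:ℝ)+1)
def yc (m K k t : ℕ) : ℝ := 3^(win m K k t) * T m + sh m k t
def pt (m K k t : ℕ) : E := pt2 (xc K k t) (yc m K k t)
open Classical in
def SS (m K : ℕ) : Finset E := (Finset.range m ×ˢ Finset.range K).image (fun kt => pt m K kt.1 kt.2)

def Valid (m i j : ℕ) : Prop := 1 ≤ i ∧ i + 2 ≤ j ∧ j ≤ m + 1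

lemma A_pos (m : ℕ) : 0 < A m := by unfold A; positivity
lemma T_pos (m : ℕ) : 0 < T m := by unfold T; positivity
lemma gam_pos (m : ℕ) : 0 < gam m := by unfold gam; positivity

lemma cast_diff {i j : ℕ} (h : i ≤ j) : ((j - i : ℕ) : ℝ) = (j:ℝ) - (i:ℝ) :=
  Nat.cast_sub h

lemma eps_pos {m i j : ℕ} (h : Valid m i j) : 0 < eps m i j := by
  obtain ⟨h1, h2, h3⟩ := h
  have : 0 < i*(m+2)+j := by omega
  have : (0:ℝ) < ((i*(m+2)+j : ℕ) : ℝ) := by exact_mod_cast this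
  unfold eps
  positivity

lemma eps_lt_half {m i j : ℕ} (h : Valid m i j) : eps m i j < 1/2 := by
  obtain ⟨h1, h2, h3⟩ := h
  have hn : (i*(m+2)+j : ℕ) < (m+2)^2 := by nlinarith [h3, h2, h1]
  have h2 : ((i*(m+2)+j : ℕ) : ℝ) < (((m+2)^2 : ℕ) : ℝ) := by exact_mod_cast hn
  unfold eps
  rw [div_lt_iff₀ (by positivity)]
  push_cast at h2 ⊢
  nlinarith

lemma v_lb {m i j : ℕ} (h : Valid m i j) : A m - m ≤ v m i j := by
  obtain ⟨h1, h2, h3⟩ := h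
  have hj : (j:ℝ) - (i:ℝ) ≤ m := by
    have h4 : j ≤ m + i := by omega
    have := (Nat.cast_le (α := ℝ)).2 h4
    push_cast at this; linarith
  have := eps_pos ⟨h1, h2, h3⟩
  unfold v; linarith

lemma v_ub {m i j : ℕ} (h : Valid m i j) : v m i j ≤ A m - 3/2 := by
  obtain ⟨h1, h2, h3⟩ := h
  have hj : (2:ℝ) ≤ (j:ℝ) - (i:ℝ) := by
    have h4 := (Nat.cast_le (α := ℝ)).2 h2
    push_cast at h4; linarith
  have := eps_lt_half ⟨h1, h2, h3⟩
  unfold v; linarith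

lemma v_pos {m i j : ℕ} (h : Valid m i j) : 0 < v m i j := by
  have := v_lb h
  have hm : (m:ℝ) + 4 ≤ A m := by unfold A; nlinarith [Nat.cast_nonneg (α := ℝ) m]
  linarith

lemma v_gap {m i j i' j' : ℕ} (h : Valid m i j) (h' : Valid m i' j')
    (hne : (i, j) ≠ (i', j')) : gam m ≤ |v m i j - v m i' j'| := by
  obtain ⟨h1, h2, h3⟩ := h
  obtain ⟨h1', h2', h3'⟩ := h'
  have hmpos : (0:ℝ) < ((m:ℝ)+2)^2 := by positivity
  rcases eq_or_ne (j - i) (j' - i') with hd | hd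
  · have hdr : (j:ℝ) - (i:ℝ) = (j':ℝ) - (i':ℝ) := by
      rw [← cast_diff (by omega : i ≤ j), ← cast_diff (by omega : i' ≤ j'), hd]
    have hnum : i*(m+2)+j ≠ i'*(m+2)+j' := by
      intro hcon
      obtain ⟨hi, hj⟩ := addMul_inj (by omega) (by omega : j < m+2) (by omega : j' < m+2) hcon
      exact hne (Prod.ext hi hj)
    have hge := nat_abs_ge_one hnum
    have hv : v m i j - v m i' j' = eps m i j - eps m i' j' := by
      unfold v; rw [hdr]; ring
    rw [hv]
    unfold eps gam
    rw [div_sub_div_same, abs_div, abs_of_pos (a := 2*((m:ℝ)+2)^2) (by positivity),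
      div_le_div_iff₀ (by positivity) (by positivity)]
    nlinarith [hge, hmpos]
  · have hdd : (1:ℝ) ≤ |((j':ℝ) - i') - ((j:ℝ) - i)| := by
      have e : ((j':ℝ) - i') - ((j:ℝ) - i) = ((j'-i' : ℕ):ℝ) - ((j-i : ℕ):ℝ) := by
        rw [cast_diff (by omega : i ≤ j), cast_diff (by omega : i' ≤ j')]
      rw [e]; exact nat_abs_ge_one (Ne.symm hd)
    have he := eps_pos ⟨h1,h2,h3⟩
    have he2 := eps_lt_half ⟨h1,h2,h3⟩
    have he' := eps_pos ⟨h1',h2',h3'⟩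
    have he2' := eps_lt_half ⟨h1',h2',h3'⟩
    have heps : |eps m i j - eps m i' j'| ≤ 1/2 := by
      rw [abs_le]; constructor <;> linarith
    have hv : v m i j - v m i' j' = (((j':ℝ) - i') - ((j:ℝ) - i)) + (eps m i j - eps m i' j') := by
      unfold v; ring
    rw [hv]
    have heps1 : |eps m i j - eps m i' j'| ≤ 1 := by linarith
    have hlow := abs_lower 1 hdd heps1
    have hone : (1:ℝ) ≤ ((m:ℝ)+2)^2 := by nlinarith [Nat.cast_nonneg (α := ℝ) m]
    have hg : gam m ≤ 1/2 := by
      unfold gam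
      rw [div_le_iff₀ (by positivity)]
      nlinarith
    linarith


lemma win_eq_cases {m K k t k' t' : ℕ} (hK : m+1 ≤ K) (hk : k < m) (ht : t < K)
    (hk' : k' < m) (ht' : t' < K) (h : win m K k t = win m K k' t') :
    (k = k' ∧ t = t') ∨
    (¬isR m k t ∧ isR m k' t' ∧ k = t'+k'+1-m ∧ t = m-t'-2) ∨
    (¬isR m k' t' ∧ isR m k t ∧ k' = t+k+1-m ∧ t' = m-t-2) := by
  unfold win at h
  by_cases hR : isR m k t <;> by_cases hR' : isR m k' t' <;>
    simp only [hR, hR', if_true, if_false, if_pos, if_neg, not_false_iff] at h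
  · obtain ⟨e1, e2⟩ := addMul_inj (by omega) (by omega : m-t-2 < K) (by omega : m-t'-2 < K) h
    left
    obtain ⟨a1, a2⟩ := hR; obtain ⟨b1, b2⟩ := hR'
    omega
  · obtain ⟨e1, e2⟩ := addMul_inj (by omega) (by omega : m-t-2 < K) ht' h
    right; right; exact ⟨hR', hR, e1.symm, e2.symm⟩
  · obtain ⟨e1, e2⟩ := addMul_inj (by omega) ht (by omega : m-t'-2 < K) h
    right; left; exact ⟨hR, hR', e1, e2⟩
  · obtain ⟨e1, e2⟩ := addMul_inj (by omega) ht ht' h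
    left; exact ⟨e1, e2⟩

-- designated pair slots
def Lk (i : ℕ) : ℕ := i - 1
def Lt (i j : ℕ) : ℕ := j - i - 2
def Rk (j : ℕ) : ℕ := j - 2
def Rt (m i j : ℕ) : ℕ := m + i - j

lemma L_range {m K i j : ℕ} (hK : m+1 ≤ K) (h : Valid m i j) : Lk i < m ∧ Lt i j < K := by
  obtain ⟨h1, h2, h3⟩ := h; unfold Lk Lt; omega

lemma R_range {m K i j : ℕ} (hK : m+1 ≤ K) (h : Valid m i j) : Rk j < m ∧ Rt m i j < K := by
  obtain ⟨h1, h2, h3⟩ := h; unfold Rk Rt; omega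

lemma L_notR {m i j : ℕ} (h : Valid m i j) : ¬isR m (Lk i) (Lt i j) := by
  obtain ⟨h1, h2, h3⟩ := h; unfold isR Lk Lt; omega

lemma R_isR {m i j : ℕ} (h : Valid m i j) : isR m (Rk j) (Rt m i j) := by
  obtain ⟨h1, h2, h3⟩ := h; unfold isR Rk Rt; omega

lemma win_L {m K i j : ℕ} (h : Valid m i j) :
    win m K (Lk i) (Lt i j) = (i-1)*K + (j-i-2) := by
  rw [win, if_neg (L_notR h)]; rfl

lemma win_R {m K i j : ℕ} (h : Valid m i j) :
    win m K (Rk j) (Rt m i j) = (i-1)*K + (j-i-2) := by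
  obtain ⟨h1, h2, h3⟩ := h
  rw [win, if_pos (R_isR ⟨h1,h2,h3⟩)]
  unfold Rk Rt
  congr 1 <;> [skip; omega]
  congr 1; omega

lemma sh_L {m i j : ℕ} (h : Valid m i j) : sh m (Lk i) (Lt i j) = 0 := by
  rw [sh, if_neg (L_notR h)]

lemma sh_R {m i j : ℕ} (h : Valid m i j) : sh m (Rk j) (Rt m i j) = v m i j := by
  obtain ⟨h1, h2, h3⟩ := h
  rw [sh, if_pos (R_isR ⟨h1,h2,h3⟩)]
  unfold Rk Rt
  congr 2 <;> omega

lemma isR_toPair {m k t : ℕ} (hk : k < m) (hR : isR m k t) :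
    Valid m (t+k+2-m) (k+2) ∧ Rk (k+2) = k ∧ Rt m (t+k+2-m) (k+2) = t := by
  obtain ⟨a1, a2⟩ := hR
  refine ⟨⟨by omega, by omega, by omega⟩, by unfold Rk; omega, by unfold Rt; omega⟩

lemma L_inj {m i j i' j' : ℕ} (h : Valid m i j) (h' : Valid m i' j')
    (e : Lk i = Lk i' ∧ Lt i j = Lt i' j') : i = i' ∧ j = j' := by
  obtain ⟨h1, h2, h3⟩ := h; obtain ⟨h1', h2', h3'⟩ := h'
  unfold Lk Lt at e; omega

-- x coordinates
lemma xc_bounds {K k t : ℕ} (ht : t < K) : (k:ℝ)+1 < xc K k t ∧ xc K k t < (k:ℝ)+2 := by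
  have hKp : (0:ℝ) < (K:ℝ)+1 := by positivity
  have h1 : (0:ℝ) < ((t:ℝ)+1)/((K:ℝ)+1) := by positivity
  have h2 : ((t:ℝ)+1)/((K:ℝ)+1) < 1 := by
    rw [div_lt_one hKp]
    have : (t:ℝ) < K := by exact_mod_cast ht
    linarith
  unfold xc; constructor <;> linarith

lemma xc_k_eq {K k t k' t' : ℕ} (ht : t < K) (ht' : t' < K)
    (h : xc K k t = xc K k' t') : k = k' := by
  by_contra hne
  obtain ⟨b1, b2⟩ := xc_bounds (k := k) ht
  obtain ⟨b1', b2'⟩ := xc_bounds (k := k') ht'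
  rcases Nat.lt_or_ge k k' with hl | hl
  · have : (k:ℝ)+2 ≤ (k':ℝ)+1 := by
      have : k+1 ≤ k' := hl
      have := (Nat.cast_le (α := ℝ)).2 this
      push_cast at this; linarith
    linarith
  · have hl' : k' < k := by omega
    have : (k':ℝ)+2 ≤ (k:ℝ)+1 := by
      have : k'+1 ≤ k := hl'
      have := (Nat.cast_le (α := ℝ)).2 this
      push_cast at this; linarith
    linarith

lemma xc_inj {K k t k' t' : ℕ} (ht : t < K) (ht' : t' < K)
    (h : xc K k t = xc K k' t') : k = k' ∧ t = t' := by
  obtain rfl : k = k' := xc_k_eq ht ht' h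
  refine ⟨rfl, ?_⟩
  unfold xc at h
  have hKp : (0:ℝ) < (K:ℝ)+1 := by positivity
  have : ((t:ℝ)+1)/((K:ℝ)+1) = ((t':ℝ)+1)/((K:ℝ)+1) := by linarith
  field_simp at this
  exact_mod_cast (by linarith : (t:ℝ) = (t':ℝ))

lemma xc_gap {m K k t k' t' : ℕ} (hk : k < m) (ht : t < K) (hk' : k' < m) (ht' : t' < K) :
    |xc K k t - xc K k' t'| ≤ m := by
  obtain ⟨b1, b2⟩ := xc_bounds (k := k) ht
  obtain ⟨b1', b2'⟩ := xc_bounds (k := k') ht'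
  have c1 : (k:ℝ) ≤ m - 1 := by
    have : k+1 ≤ m := hk
    have := (Nat.cast_le (α := ℝ)).2 this; push_cast at this; linarith
  have c1' : (k':ℝ) ≤ m - 1 := by
    have : k'+1 ≤ m := hk'
    have := (Nat.cast_le (α := ℝ)).2 this; push_cast at this; linarith
  have c2 : (0:ℝ) ≤ k := Nat.cast_nonneg k
  have c2' : (0:ℝ) ≤ k' := Nat.cast_nonneg k'
  rw [abs_le]; constructor <;> linarith

-- pow 3 uniqueness
lemma pow3_pair_inj {a b a' b' : ℕ} (hab : b < a) (hab' : b' < a')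
    (h : 3^a - 3^b = 3^a' - 3^b') : a = a' ∧ b = b' := by
  have e1 : 3^b ≤ 3^a := Nat.pow_le_pow_right (by norm_num) hab.le
  have e2 : 3^b' ≤ 3^a' := Nat.pow_le_pow_right (by norm_num) hab'.le
  have h2 : 3^a + 3^b' = 3^a' + 3^b := by omega
  have hbpos : 0 < 3^b := Nat.pow_pos (by norm_num)
  have hbpos' : 0 < 3^b' := Nat.pow_pos (by norm_num)
  have ha : a = a' := by
    by_contra hne
    rcases (Ne.lt_or_gt hne) with hl | hl
    · have k2 : 3^b' ≤ 3^(a'-1) := Nat.pow_le_pow_right (by norm_num) (by omega)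
      have k3 : 3^a ≤ 3^(a'-1) := Nat.pow_le_pow_right (by norm_num) (by omega)
      have k4 : 3^a' = 3*3^(a'-1) := by
        conv_lhs => rw [show a' = (a'-1)+1 by omega]
        rw [pow_succ]; ring
      omega
    · have k2 : 3^b ≤ 3^(a-1) := Nat.pow_le_pow_right (by norm_num) (by omega)
      have k3 : 3^a' ≤ 3^(a-1) := Nat.pow_le_pow_right (by norm_num) (by omega)
      have k4 : 3^a = 3*3^(a-1) := by
        conv_lhs => rw [show a = (a-1)+1 by omega]
        rw [pow_succ]; ring
      omega
  subst ha
  have : 3^b = 3^b' := by omega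
  exact ⟨rfl, Nat.pow_right_injective (by norm_num) this⟩

-- cN
def cN (a b : ℕ) : ℕ := 3^(max a b) - 3^(min a b)

lemma cN_cast (a b : ℕ) : (cN a b : ℝ) = |(3:ℝ)^a - (3:ℝ)^b| := by
  rcases le_total a b with hab | hab
  · have h1 : (3:ℕ)^a ≤ 3^b := Nat.pow_le_pow_right (by norm_num) hab
    have h1' : (3:ℝ)^a ≤ (3:ℝ)^b := by exact_mod_cast h1
    rw [cN, max_eq_right hab, min_eq_left hab, Nat.cast_sub h1, abs_sub_comm,
      abs_of_nonneg (by linarith)]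
    push_cast; ring
  · have h1 : (3:ℕ)^b ≤ 3^a := Nat.pow_le_pow_right (by norm_num) hab
    have h1' : (3:ℝ)^b ≤ (3:ℝ)^a := by exact_mod_cast h1
    rw [cN, max_eq_left hab, min_eq_right hab, Nat.cast_sub h1,
      abs_of_nonneg (by linarith)]
    push_cast; ring

lemma cN_ge_two {a b : ℕ} (h : a ≠ b) : 2 ≤ cN a b := by
  have hlt : min a b < max a b := by omega
  have h1 : 3^(min a b + 1) ≤ 3^(max a b) := Nat.pow_le_pow_right (by norm_num) (by omega)
  have h2 : 3^(min a b + 1) = 3 * 3^(min a b) := by rw [pow_succ]; ring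
  have h3 : 0 < 3^(min a b) := Nat.pow_pos (by norm_num)
  unfold cN; omega

lemma cN_inj {a b a' b' : ℕ} (hab : a ≠ b) (hab' : a' ≠ b')
    (h : cN a b = cN a' b') : (a = a' ∧ b = b') ∨ (a = b' ∧ b = a') := by
  have h1 := pow3_pair_inj (a := max a b) (b := min a b) (a' := max a' b') (b' := min a' b')
    (by have : 3^(min a b) < 3^(max a b) := Nat.pow_lt_pow_right (by norm_num) (by omega); omega)
    (by have : 3^(min a' b') < 3^(max a' b') := Nat.pow_lt_pow_right (by norm_num) (by omega); omega)
    h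
  omega

-- squared distances
def dsq (m K k t k' t' : ℕ) : ℝ :=
  (xc K k t - xc K k' t')^2 + (yc m K k t - yc m K k' t')^2

lemma dsq_nonneg (m K k t k' t' : ℕ) : 0 ≤ dsq m K k t k' t' := by
  unfold dsq; positivity

lemma dsq_comm (m K k t k' t' : ℕ) : dsq m K k t k' t' = dsq m K k' t' k t := by
  unfold dsq; ring

lemma dist_pt (m K k t k' t' : ℕ) :
    dist (pt m K k t) (pt m K k' t') = Real.sqrt (dsq m K k t k' t') := by
  rw [pt, pt, dist_pt2]; rfl

lemma T_ge_A (m : ℕ) : A m ≤ T m := by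
  unfold A T
  have h2 : (1:ℝ) ≤ (m:ℝ)+2 := by have := Nat.cast_nonneg (α := ℝ) m; linarith
  exact pow_le_pow_right₀ h2 (by norm_num)

lemma A_ge_nine {m : ℕ} (hm : 1 ≤ m) : 9 ≤ A m := by
  unfold A
  have : (1:ℝ) ≤ (m:ℝ) := by exact_mod_cast hm
  nlinarith

lemma m_sq_le_A (m : ℕ) : (m:ℝ)^2 ≤ A m := by
  unfold A
  have := Nat.cast_nonneg (α := ℝ) m
  nlinarith

lemma T_eq (m : ℕ) : T m = (A m)^4 := by unfold A T; ring

lemma sh_bounds {m k t : ℕ} (hk : k < m) : 0 ≤ sh m k t ∧ sh m k t ≤ A m - 3/2 := by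
  unfold sh
  split_ifs with hR
  · obtain ⟨hval, -, -⟩ := isR_toPair hk hR
    exact ⟨(v_pos hval).le, v_ub hval⟩
  · have h9 : (9:ℝ) ≤ A m ∨ 0 ≤ A m - 3/2 := by
      right
      unfold A
      have := Nat.cast_nonneg (α := ℝ) m
      nlinarith
    refine ⟨le_refl 0, ?_⟩
    unfold A
    have := Nat.cast_nonneg (α := ℝ) m
    nlinarith

lemma yc_eq (m K k t : ℕ) : yc m K k t = (3:ℝ)^(win m K k t) * T m + sh m k t := rfl

lemma dy_ub {m : ℕ} {a b : ℕ} {sa sb : ℝ} (h1 : 0 ≤ sa) (h2 : sa ≤ A m)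
    (h3 : 0 ≤ sb) (h4 : sb ≤ A m) :
    |((3:ℝ)^a * T m + sa) - ((3:ℝ)^b * T m + sb)| ≤ (cN a b : ℝ) * T m + A m := by
  have e : ((3:ℝ)^a * T m + sa) - ((3:ℝ)^b * T m + sb)
      = ((3:ℝ)^a - 3^b) * T m + (sa - sb) := by ring
  rw [e]
  calc |((3:ℝ)^a - 3^b) * T m + (sa - sb)| ≤ |((3:ℝ)^a - 3^b) * T m| + |sa - sb| := abs_add_le _ _
  _ = |(3:ℝ)^a - 3^b| * T m + |sa - sb| := by rw [abs_mul, abs_of_pos (T_pos m)]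
  _ ≤ (cN a b : ℝ) * T m + A m := by
      rw [cN_cast]
      have : |sa - sb| ≤ A m := by rw [abs_le]; constructor <;> linarith
      linarith

lemma dy_lb {m : ℕ} {a b : ℕ} {sa sb : ℝ} (hab : a ≠ b) (h1 : 0 ≤ sa) (h2 : sa ≤ A m)
    (h3 : 0 ≤ sb) (h4 : sb ≤ A m) :
    (cN a b : ℝ) * T m - A m ≤ |((3:ℝ)^a * T m + sa) - ((3:ℝ)^b * T m + sb)| := by
  have e : ((3:ℝ)^a * T m + sa) - ((3:ℝ)^b * T m + sb)
      = ((3:ℝ)^a - 3^b) * T m + (sa - sb) := by ring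
  rw [e]
  have hc2 : (2:ℝ) ≤ (cN a b : ℝ) := by exact_mod_cast cN_ge_two hab
  have hTA := T_ge_A m
  have hA := A_pos m
  have hx : (cN a b : ℝ) * T m ≤ |((3:ℝ)^a - 3^b) * T m| := by
    rw [abs_mul, abs_of_pos (T_pos m), ← cN_cast]
  have hy : |sa - sb| ≤ (cN a b : ℝ) * T m := by
    have : |sa - sb| ≤ A m := by rw [abs_le]; constructor <;> linarith
    nlinarith [T_pos m]
  have := abs_lower ((cN a b : ℝ) * T m) hx hy
  have : |sa - sb| ≤ A m := by rw [abs_le]; constructor <;> linarith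
  have h5 := abs_lower ((cN a b : ℝ) * T m) hx hy
  have h6 : |sa - sb| ≤ A m := by rw [abs_le]; constructor <;> linarith
  linarith

lemma dsq_ub {m K k t k' t' : ℕ} (hk : k < m) (ht : t < K) (hk' : k' < m) (ht' : t' < K) :
    dsq m K k t k' t' ≤ ((cN (win m K k t) (win m K k' t') : ℝ) * T m + A m)^2 + (m:ℝ)^2 := by
  obtain ⟨s1, s2⟩ := sh_bounds (t := t) hk
  obtain ⟨s1', s2'⟩ := sh_bounds (t := t') hk'
  have hdy := dy_ub (m := m) (a := win m K k t) (b := win m K k' t')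
    s1 (by linarith) s1' (by linarith)
  have hdx := xc_gap hk ht hk' ht'
  unfold dsq
  have e1 : (xc K k t - xc K k' t')^2 ≤ (m:ℝ)^2 := by
    rw [← sq_abs]
    exact pow_le_pow_left₀ (abs_nonneg _) hdx 2
  have e2 : (yc m K k t - yc m K k' t')^2 ≤ ((cN (win m K k t) (win m K k' t') : ℝ) * T m + A m)^2 := by
    rw [← sq_abs]
    refine pow_le_pow_left₀ (abs_nonneg _) ?_ 2
    rw [yc_eq, yc_eq]
    exact hdy
  linarith

lemma dsq_lb {m K k t k' t' : ℕ} (hk : k < m) (hk' : k' < m)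
    (hw : win m K k t ≠ win m K k' t') :
    ((cN (win m K k t) (win m K k' t') : ℝ) * T m - A m)^2 ≤ dsq m K k t k' t' := by
  obtain ⟨s1, s2⟩ := sh_bounds (t := t) hk
  obtain ⟨s1', s2'⟩ := sh_bounds (t := t') hk'
  have hdy := dy_lb (m := m) hw s1 (by linarith) s1' (by linarith)
  unfold dsq
  have e2 : ((cN (win m K k t) (win m K k' t') : ℝ) * T m - A m)^2 ≤ (yc m K k t - yc m K k' t')^2 := by
    rw [← sq_abs (yc m K k t - yc m K k' t')]
    refine pow_le_pow_left₀ ?_ ?_ 2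
    · have hc2 : (2:ℝ) ≤ (cN (win m K k t) (win m K k' t') : ℝ) := by
        exact_mod_cast cN_ge_two hw
      have := T_ge_A m
      have := A_pos m
      nlinarith [T_pos m]
    · rw [yc_eq, yc_eq]; exact hdy
  have e1 : 0 ≤ (xc K k t - xc K k' t')^2 := by positivity
  linarith

lemma v_sep_len {m i j i' j' : ℕ} (h : Valid m i j) (h' : Valid m i' j')
    (hd : j - i ≠ j' - i') : 1/2 ≤ |v m i j - v m i' j'| := by
  obtain ⟨h1, h2, h3⟩ := h
  obtain ⟨h1', h2', h3'⟩ := h'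
  have hdd : (1:ℝ) ≤ |((j':ℝ) - i') - ((j:ℝ) - i)| := by
    have e : ((j':ℝ) - i') - ((j:ℝ) - i) = ((j'-i' : ℕ):ℝ) - ((j-i : ℕ):ℝ) := by
      rw [cast_diff (by omega : i ≤ j), cast_diff (by omega : i' ≤ j')]
    rw [e]; exact nat_abs_ge_one (Ne.symm hd)
  have he := eps_pos ⟨h1,h2,h3⟩
  have he2 := eps_lt_half ⟨h1,h2,h3⟩
  have he' := eps_pos ⟨h1',h2',h3'⟩
  have he2' := eps_lt_half ⟨h1',h2',h3'⟩
  have heps1 : |eps m i j - eps m i' j'| ≤ 1 := by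
    rw [abs_le]; constructor <;> linarith
  have hv : v m i j - v m i' j' = (((j':ℝ) - i') - ((j:ℝ) - i)) + (eps m i j - eps m i' j') := by
    unfold v; ring
  rw [hv]
  have hlow := abs_lower 1 hdd heps1
  have : |eps m i j - eps m i' j'| ≤ 1/2 := by rw [abs_le]; constructor <;> linarith
  linarith

lemma v_step {m i j i' j' : ℕ} (h : Valid m i j) (h' : Valid m i' j')
    (hd : j' - i' < j - i) : v m i j + 1/2 ≤ v m i' j' := by
  obtain ⟨h1, h2, h3⟩ := h
  obtain ⟨h1', h2', h3'⟩ := h'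
  have hcast : ((j':ℝ) - i') + 1 ≤ (j:ℝ) - i := by
    have e : (j'-i' : ℕ) + 1 ≤ (j-i : ℕ) := by omega
    have := (Nat.cast_le (α := ℝ)).2 e
    rw [Nat.cast_add] at this
    rw [← cast_diff (by omega : i ≤ j), ← cast_diff (by omega : i' ≤ j')]
    push_cast at this ⊢
    linarith
  have he2 := eps_lt_half ⟨h1,h2,h3⟩
  have he' := eps_pos ⟨h1',h2',h3'⟩
  unfold v; linarith

lemma gap_num {m : ℕ} (hm : 1 ≤ m) {c : ℝ} (hc : 0 ≤ c) :
    (c * T m + A m)^2 + (m:ℝ)^2 < ((c+1) * T m - A m)^2 := by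
  have hA := A_ge_nine hm
  have hT := T_eq m
  have hm2 := m_sq_le_A m
  have hTA : 9 * A m ≤ T m := by
    rw [hT]
    nlinarith [pow_le_pow_left₀ (by norm_num : (0:ℝ) ≤ 9) hA 3, A_pos m, hA]
  have k1 : 0 < T m - 2*A m := by linarith [A_pos m]
  have k2' : 9*A m * (7*A m) ≤ T m * (T m - 2*A m) :=
    mul_le_mul hTA (by linarith) (by linarith [A_pos m]) (T_pos m).le
  have k2 : (m:ℝ)^2 < T m * (T m - 2*A m) := by nlinarith [A_pos m, hA]
  have k3 : 0 ≤ 2*c*(T m)*(T m - 2*A m) :=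
    mul_nonneg (mul_nonneg (by linarith) (T_pos m).le) k1.le
  nlinarith [k2, k3]

lemma cN_zero_iff {a b : ℕ} : cN a b = 0 ↔ a = b := by
  constructor
  · intro h
    by_contra hne
    have := cN_ge_two hne
    omega
  · intro h; subst h; simp [cN]

lemma dsq_lt_of_cN_lt {m K k t k' t' a b a' b' : ℕ} (hm : 1 ≤ m)
    (hk : k < m) (ht : t < K) (hk' : k' < m) (ht' : t' < K)
    (ha : a < m) (hta : b < K) (ha' : a' < m) (hta' : b' < K)
    (hcc : cN (win m K k t) (win m K k' t') < cN (win m K a b) (win m K a' b')) :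
    dsq m K k t k' t' < dsq m K a b a' b' := by
  set c := cN (win m K k t) (win m K k' t') with hc
  set c' := cN (win m K a b) (win m K a' b') with hc'
  have hwne : win m K a b ≠ win m K a' b' := by
    intro he
    rw [he] at hc'
    have : c' = 0 := by rw [hc']; exact cN_zero_iff.2 rfl
    omega
  have h1 := dsq_ub (m := m) (K := K) hk ht hk' ht'
  have h2 := dsq_lb (m := m) (K := K) ha ha' hwne
  have h3 := gap_num hm (c := (c:ℝ)) (Nat.cast_nonneg c)
  have h4 : ((c:ℝ)+1) * T m - A m ≤ (c':ℝ) * T m - A m := by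
    have : ((c:ℝ)) + 1 ≤ (c':ℝ) := by exact_mod_cast hcc
    nlinarith [T_pos m]
  have h5 : 0 ≤ ((c:ℝ)+1) * T m - A m := by
    have := T_ge_A m
    have := A_pos m
    nlinarith [T_pos m, Nat.cast_nonneg (α := ℝ) c]
  have h6 : (((c:ℝ)+1) * T m - A m)^2 ≤ ((c':ℝ) * T m - A m)^2 := by
    exact pow_le_pow_left₀ h5 h4 2
  calc dsq m K k t k' t' ≤ ((c:ℝ) * T m + A m)^2 + (m:ℝ)^2 := h1
  _ < (((c:ℝ)+1) * T m - A m)^2 := h3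
  _ ≤ ((c':ℝ) * T m - A m)^2 := h6
  _ ≤ dsq m K a b a' b' := h2

lemma dsq_desig {m K i j : ℕ} (h : Valid m i j) :
    dsq m K (Lk i) (Lt i j) (Rk j) (Rt m i j)
      = (xc K (Lk i) (Lt i j) - xc K (Rk j) (Rt m i j))^2 + (v m i j)^2 := by
  unfold dsq
  rw [yc_eq, yc_eq, win_L h, win_R h, sh_L h, sh_R h]
  ring

lemma xdiff_desig {m K i j : ℕ} (h : Valid m i j) :
    xc K (Lk i) (Lt i j) - xc K (Rk j) (Rt m i j)
      = ((i:ℝ) - (j:ℝ) + 1) + (2*(j:ℝ) - 2*(i:ℝ) - (m:ℝ) - 2)/((K:ℝ)+1) := by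
  obtain ⟨h1, h2, h3⟩ := h
  unfold xc Lk Lt Rk Rt
  rw [show j - i - 2 = j - (i+2) by omega]
  rw [Nat.cast_sub (show 1 ≤ i by omega), Nat.cast_sub (show i+2 ≤ j by omega),
      Nat.cast_sub (show 2 ≤ j by omega), Nat.cast_sub (show j ≤ m+i by omega)]
  push_cast
  ring

lemma xdiff_bound {m K i j : ℕ} (hK : m+1 ≤ K) (h : Valid m i j) :
    |xc K (Lk i) (Lt i j) - xc K (Rk j) (Rt m i j)| ≤ (m:ℝ) := by
  obtain ⟨l1, l2⟩ := L_range (K := K) hK h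
  obtain ⟨r1, r2⟩ := R_range (K := K) hK h
  exact xc_gap l1 l2 r1 r2

lemma desig_dsq_ne {m K i j i' j' : ℕ} (hK : m+1 ≤ K) (h : Valid m i j) (h' : Valid m i' j')
    (hne : (i, j) ≠ (i', j')) :
    dsq m K (Lk i) (Lt i j) (Rk j) (Rt m i j) ≠ dsq m K (Lk i') (Lt i' j') (Rk j') (Rt m i' j') := by
  rw [dsq_desig h, dsq_desig h']
  set x := xc K (Lk i) (Lt i j) - xc K (Rk j) (Rt m i j) with hx
  set x' := xc K (Lk i') (Lt i' j') - xc K (Rk j') (Rt m i' j') with hx'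
  rcases eq_or_ne (j - i) (j' - i') with hd | hd
  · have hxeq : x = x' := by
      rw [hx, hx', xdiff_desig h, xdiff_desig h']
      obtain ⟨h1, h2, h3⟩ := h
      obtain ⟨h1', h2', h3'⟩ := h'
      have hdr : (j:ℝ) - (i:ℝ) = (j':ℝ) - (i':ℝ) := by
        rw [← cast_diff (by omega : i ≤ j), ← cast_diff (by omega : i' ≤ j'), hd]
      linear_combination ((2:ℝ)/((K:ℝ)+1) - 1) * hdr
    rw [hxeq]
    intro hcon
    have hv2 : (v m i j)^2 = (v m i' j')^2 := by linarith
    have hvne : v m i j ≠ v m i' j' := by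
      intro he
      have := v_gap h h' hne
      rw [he, sub_self, abs_zero] at this
      exact absurd this (by push_neg; exact gam_pos m)
    have hvp := v_pos h
    have hvp' := v_pos h'
    rcases hvne.lt_or_gt with hl | hl <;> nlinarith
  · intro hcon
    have hsep := v_sep_len h h' hd
    have hvp := v_pos h
    have hvp' := v_pos h'
    have hlb := v_lb h
    have hlb' := v_lb h'
    have hxm := xdiff_bound hK h
    have hxm' := xdiff_bound hK h'
    have hAmm : (m:ℝ)^2 < A m - m := by
      unfold A
      nlinarith [Nat.cast_nonneg (α := ℝ) m]
    have habs : A m - m ≤ |(v m i j)^2 - (v m i' j')^2| := by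
      have e : |(v m i j)^2 - (v m i' j')^2|
          = |v m i j - v m i' j'| * (v m i j + v m i' j') := by
        rw [show (v m i j)^2 - (v m i' j')^2
            = (v m i j - v m i' j')*(v m i j + v m i' j') by ring, abs_mul,
          abs_of_pos (by linarith : (0:ℝ) < v m i j + v m i' j')]
      rw [e]
      have hA0 : (0:ℝ) < A m - m := by nlinarith [sq_nonneg (m:ℝ)]
      calc A m - (m:ℝ) = (1/2) * (2*(A m - m)) := by ring
      _ ≤ |v m i j - v m i' j'| * (v m i j + v m i' j') :=
        mul_le_mul hsep (by linarith) (by linarith) (abs_nonneg _)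
    have b1 : x^2 ≤ (m:ℝ)^2 := by
      rw [← sq_abs x]; exact pow_le_pow_left₀ (abs_nonneg _) hxm 2
    have b2 : x'^2 ≤ (m:ℝ)^2 := by
      rw [← sq_abs x']; exact pow_le_pow_left₀ (abs_nonneg _) hxm' 2
    have hvv : (v m i j)^2 - (v m i' j')^2 = x'^2 - x^2 := by linarith
    rw [hvv] at habs
    rcases abs_cases (x'^2 - x^2) with ⟨he, -⟩ | ⟨he, -⟩ <;> rw [he] at habs <;>
      nlinarith [sq_nonneg x, sq_nonneg x']

lemma desig_dsq_le {m K i j i' j' : ℕ} (hK : m+1 ≤ K) (h : Valid m i j) (h' : Valid m i' j')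
    (hs1 : i ≤ i') (hs2 : j' ≤ j) (hne : (i, j) ≠ (i', j')) :
    dsq m K (Lk i) (Lt i j) (Rk j) (Rt m i j)
      ≤ dsq m K (Lk i') (Lt i' j') (Rk j') (Rt m i' j') := by
  rw [dsq_desig h, dsq_desig h']
  have hd : j' - i' < j - i := by
    obtain ⟨a1,a2,a3⟩ := h; obtain ⟨b1,b2,b3⟩ := h'
    rcases Nat.lt_or_ge (j' - i') (j - i) with hl | hl
    · exact hl
    · exfalso; apply hne; have : i = i' ∧ j = j' := by omega
      exact Prod.ext this.1 this.2
  have hstep := v_step h h' hd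
  have hlb := v_lb h
  have hlb' := v_lb h'
  have hxm := xdiff_bound hK h
  have hxm' := xdiff_bound hK h'
  have hAmm : (m:ℝ)^2 < A m - m := by
    unfold A; nlinarith [Nat.cast_nonneg (α := ℝ) m]
  have b1 : (xc K (Lk i) (Lt i j) - xc K (Rk j) (Rt m i j))^2 ≤ (m:ℝ)^2 := by
    rw [← sq_abs]; exact pow_le_pow_left₀ (abs_nonneg _) hxm 2
  have b2 : (xc K (Lk i') (Lt i' j') - xc K (Rk j') (Rt m i' j'))^2 ≤ (m:ℝ)^2 := by
    rw [← sq_abs]; exact pow_le_pow_left₀ (abs_nonneg _) hxm' 2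
  have key : (1/2)*(2*(A m - m)) ≤ (v m i' j' - v m i j)*(v m i' j' + v m i j) := by
    apply mul_le_mul (by linarith) (by linarith) (by nlinarith [sq_nonneg (m:ℝ)]) (by linarith)
  nlinarith [key, b1, b2, sq_nonneg (xc K (Lk i) (Lt i j) - xc K (Rk j) (Rt m i j))]

lemma dsq_desig_lt_A2 {m K i j : ℕ} (hK : m+1 ≤ K) (h : Valid m i j) :
    dsq m K (Lk i) (Lt i j) (Rk j) (Rt m i j) < (A m)^2 := by
  rw [dsq_desig h]
  have hub := v_ub h
  have hlb := v_lb h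
  have hxm := xdiff_bound hK h
  have b1 : (xc K (Lk i) (Lt i j) - xc K (Rk j) (Rt m i j))^2 ≤ (m:ℝ)^2 := by
    rw [← sq_abs]; exact pow_le_pow_left₀ (abs_nonneg _) hxm 2
  have hAmm : (m:ℝ)^2 < A m - m := by
    unfold A; nlinarith [Nat.cast_nonneg (α := ℝ) m]
  have hApos := A_pos m
  have hv0 : 0 < v m i j := v_pos h
  nlinarith [Nat.cast_nonneg (α := ℝ) m]

lemma dsq_ge_A2 {m K k t k' t' : ℕ} (hk : k < m) (hk' : k' < m)
    (hw : win m K k t ≠ win m K k' t') : (A m)^2 ≤ dsq m K k t k' t' := by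
  have h2 := dsq_lb (K := K) (t := t) (t' := t') hk hk' hw
  have hc2 : (2:ℝ) ≤ (cN (win m K k t) (win m K k' t') : ℝ) := by
    exact_mod_cast cN_ge_two hw
  have hTA := T_ge_A m
  have hApos := A_pos m
  have h3 : A m ≤ (cN (win m K k t) (win m K k' t') : ℝ) * T m - A m := by
    nlinarith [T_pos m]
  calc (A m)^2 ≤ ((cN (win m K k t) (win m K k' t') : ℝ) * T m - A m)^2 :=
        pow_le_pow_left₀ hApos.le h3 2
  _ ≤ _ := h2

lemma win_desig_inj {m K i j i' j' : ℕ} (hK : m+1 ≤ K) (h : Valid m i j) (h' : Valid m i' j')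
    (he : (i-1)*K + (j-i-2) = (i'-1)*K + (j'-i'-2)) : i = i' ∧ j = j' := by
  obtain ⟨a1,a2,a3⟩ := h; obtain ⟨b1,b2,b3⟩ := h'
  obtain ⟨e1, e2⟩ := addMul_inj (by omega) (by omega : j-i-2 < K) (by omega : j'-i'-2 < K) he
  omega

lemma share_shift {m K k t k' t' : ℕ} (hK : m+1 ≤ K) (hk : k < m) (ht : t < K)
    (hk' : k' < m) (ht' : t' < K) (hw : win m K k t = win m K k' t')
    (hne : ¬(k = k' ∧ t = t')) :
    ∃ i j, Valid m i j ∧ win m K k t = (i-1)*K + (j-i-2) ∧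
      ((sh m k t = 0 ∧ sh m k' t' = v m i j) ∨ (sh m k t = v m i j ∧ sh m k' t' = 0)) := by
  rcases win_eq_cases hK hk ht hk' ht' hw with ⟨e1, e2⟩ | ⟨hnR, hR, e1, e2⟩ | ⟨hnR, hR, e1, e2⟩
  · exact absurd ⟨e1, e2⟩ hne
  · refine ⟨t'+k'+2-m, k'+2, (isR_toPair hk' hR).1, ?_, Or.inl ⟨?_, ?_⟩⟩
    · rw [win, if_neg hnR]
      obtain ⟨a1, a2⟩ := hR
      congr 1
      · congr 1; omega
      · omega
    · rw [sh, if_neg hnR]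
    · rw [sh, if_pos hR]
  · refine ⟨t+k+2-m, k+2, (isR_toPair hk hR).1, ?_, Or.inr ⟨?_, ?_⟩⟩
    · rw [win, if_pos hR]
      obtain ⟨a1, a2⟩ := hR
      congr 1
      · congr 1; omega
      · omega
    · rw [sh, if_pos hR]
    · rw [sh, if_neg hnR]

lemma gam_le_Am {m : ℕ} (hm : 1 ≤ m) : gam m ≤ A m - m - 1 := by
  have h9 := A_ge_nine hm
  have hAmm : (m:ℝ)^2 < A m - m := by
    unfold A; nlinarith [Nat.cast_nonneg (α := ℝ) m]
  have hg : gam m ≤ 1/2 := by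
    unfold gam
    rw [div_le_iff₀ (by positivity)]
    nlinarith [Nat.cast_nonneg (α := ℝ) m]
  nlinarith [sq_nonneg (m:ℝ), Nat.cast_nonneg (α := ℝ) m]

lemma shift_sep {m K k1 t1 k2 t2 k3 t3 k4 t4 : ℕ} (hm : 1 ≤ m) (hK : m+1 ≤ K)
    (b1 : k1 < m) (c1 : t1 < K) (b2 : k2 < m) (c2 : t2 < K)
    (b3 : k3 < m) (c3 : t3 < K) (b4 : k4 < m) (c4 : t4 < K)
    (hw1 : win m K k1 t1 = win m K k3 t3) (hw2 : win m K k2 t2 = win m K k4 t4)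
    (hab : win m K k1 t1 ≠ win m K k2 t2)
    (hne : ¬((k1,t1) = (k3,t3) ∧ (k2,t2) = (k4,t4))) :
    gam m ≤ |(sh m k1 t1 - sh m k2 t2) - (sh m k3 t3 - sh m k4 t4)| := by
  have hgAm := gam_le_Am hm
  have hgpos := gam_pos m
  have hmr : (1:ℝ) ≤ m := by exact_mod_cast hm
  by_cases hp : k1 = k3 ∧ t1 = t3
  · have hq : ¬(k2 = k4 ∧ t2 = t4) := by
      intro hq; exact hne ⟨Prod.ext hp.1 hp.2, Prod.ext hq.1 hq.2⟩
    obtain ⟨i, j, hv, hwin, hsh⟩ := share_shift hK b2 c2 b4 c4 hw2 hq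
    have hvlb := v_lb hv
    have hsp : sh m k1 t1 = sh m k3 t3 := by rw [hp.1, hp.2]
    rcases hsh with ⟨e1, e2⟩ | ⟨e1, e2⟩
    · have hval : (sh m k1 t1 - sh m k2 t2) - (sh m k3 t3 - sh m k4 t4) = v m i j := by
        rw [hsp, e1, e2]; ring
      rw [hval, abs_of_pos (v_pos hv)]; linarith
    · have hval : (sh m k1 t1 - sh m k2 t2) - (sh m k3 t3 - sh m k4 t4) = -(v m i j) := by
        rw [hsp, e1, e2]; ring
      rw [hval, abs_neg, abs_of_pos (v_pos hv)]; linarith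
  · obtain ⟨i, j, hv, hwin, hsh⟩ := share_shift hK b1 c1 b3 c3 hw1 hp
    have hvlb := v_lb hv
    by_cases hq : k2 = k4 ∧ t2 = t4
    · have hsq : sh m k2 t2 = sh m k4 t4 := by rw [hq.1, hq.2]
      rcases hsh with ⟨e1, e2⟩ | ⟨e1, e2⟩
      · have hval : (sh m k1 t1 - sh m k2 t2) - (sh m k3 t3 - sh m k4 t4) = -(v m i j) := by
          rw [hsq, e1, e2]; ring
        rw [hval, abs_neg, abs_of_pos (v_pos hv)]; linarith
      · have hval : (sh m k1 t1 - sh m k2 t2) - (sh m k3 t3 - sh m k4 t4) = v m i j := by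
          rw [hsq, e1, e2]; ring
        rw [hval, abs_of_pos (v_pos hv)]; linarith
    · obtain ⟨i', j', hv', hwin', hsh'⟩ := share_shift hK b2 c2 b4 c4 hw2 hq
      have hvlb' := v_lb hv'
      have hpairne : (i, j) ≠ (i', j') := by
        intro he
        apply hab
        rw [hwin, hwin']
        rw [Prod.mk.injEq] at he
        rw [he.1, he.2]
      have hgap := v_gap hv hv' hpairne
      have hvp := v_pos hv
      have hvp' := v_pos hv'
      rcases hsh with ⟨e1, e2⟩ | ⟨e1, e2⟩ <;> rcases hsh' with ⟨f1, f2⟩ | ⟨f1, f2⟩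
      · have hval : (sh m k1 t1 - sh m k2 t2) - (sh m k3 t3 - sh m k4 t4)
            = -(v m i j - v m i' j') := by rw [e1, e2, f1, f2]; ring
        rw [hval, abs_neg]; exact hgap
      · have hval : (sh m k1 t1 - sh m k2 t2) - (sh m k3 t3 - sh m k4 t4)
            = -(v m i j + v m i' j') := by rw [e1, e2, f1, f2]; ring
        rw [hval, abs_neg, abs_of_pos (by linarith)]; linarith
      · have hval : (sh m k1 t1 - sh m k2 t2) - (sh m k3 t3 - sh m k4 t4)
            = v m i j + v m i' j' := by rw [e1, e2, f1, f2]; ring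
        rw [hval, abs_of_pos (by linarith)]; linarith
      · have hval : (sh m k1 t1 - sh m k2 t2) - (sh m k3 t3 - sh m k4 t4)
            = v m i j - v m i' j' := by rw [e1, e2, f1, f2]; ring
        rw [hval]; exact hgap

lemma gam_mul_key {m : ℕ} (hm : 1 ≤ m) : (m:ℝ)^2 < gam m * (4*T m - 2*A m) := by
  have hkey : gam m * (4*T m - 2*A m) = 2*(A m)^3 - 1 := by
    unfold gam A T
    have h0 : ((m:ℝ)+2)^2 ≠ 0 := by positivity
    field_simp
    ring
  rw [hkey]
  have hA := A_ge_nine hm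
  have hm2 := m_sq_le_A m
  have hApos := A_pos m
  nlinarith [sq_nonneg (A m)]

lemma same_window_ne {m K k1 t1 k2 t2 k3 t3 k4 t4 : ℕ} (hm : 1 ≤ m) (hK : m+1 ≤ K)
    (b1 : k1 < m) (c1 : t1 < K) (b2 : k2 < m) (c2 : t2 < K)
    (b3 : k3 < m) (c3 : t3 < K) (b4 : k4 < m) (c4 : t4 < K)
    (hw1 : win m K k1 t1 = win m K k3 t3) (hw2 : win m K k2 t2 = win m K k4 t4)
    (hab : win m K k1 t1 ≠ win m K k2 t2)
    (hne : ¬((k1,t1) = (k3,t3) ∧ (k2,t2) = (k4,t4))) :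
    dsq m K k1 t1 k2 t2 ≠ dsq m K k3 t3 k4 t4 := by
  intro heq
  set a := win m K k1 t1 with ha
  set b := win m K k2 t2 with hb
  set W := ((3:ℝ)^a - (3:ℝ)^b) * T m with hW
  set d1 := sh m k1 t1 - sh m k2 t2 with hd1
  set d2 := sh m k3 t3 - sh m k4 t4 with hd2
  have hsep := shift_sep hm hK b1 c1 b2 c2 b3 c3 b4 c4 hw1 hw2 hab hne
  obtain ⟨s1a, s1b⟩ := sh_bounds (t := t1) b1
  obtain ⟨s2a, s2b⟩ := sh_bounds (t := t2) b2
  obtain ⟨s3a, s3b⟩ := sh_bounds (t := t3) b3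
  obtain ⟨s4a, s4b⟩ := sh_bounds (t := t4) b4
  have hy1 : yc m K k1 t1 - yc m K k2 t2 = W + d1 := by
    rw [yc_eq, yc_eq, ← ha, ← hb]; ring
  have hy2 : yc m K k3 t3 - yc m K k4 t4 = W + d2 := by
    rw [yc_eq, yc_eq, ← hw1, ← hw2]; ring
  have hc2 : (2:ℝ) ≤ (cN a b : ℝ) := by exact_mod_cast cN_ge_two hab
  have hWabs : |W| = (cN a b : ℝ) * T m := by
    rw [hW, abs_mul, abs_of_pos (T_pos m), cN_cast]
  have hTA := T_ge_A m
  have hApos := A_pos m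
  have hTpos := T_pos m
  -- |2W + d1 + d2| ≥ 4T - 2A
  have hx : 2*(cN a b : ℝ) * T m ≤ |2*W| := by
    rw [abs_mul, abs_of_pos (by norm_num : (0:ℝ) < 2), hW, abs_mul,
      abs_of_pos (T_pos m), cN_cast]
    exact le_of_eq (by ring)
  have h1 : |d1 + d2| ≤ 2*A m := by
    rw [abs_le, hd1, hd2]; constructor <;> linarith
  have hdd : |d1 + d2| ≤ 2*(cN a b : ℝ) * T m := by
    calc |d1 + d2| ≤ 2*A m := h1
    _ ≤ 2*(cN a b : ℝ) * T m := by nlinarith [hc2, hTA, hTpos, hApos]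
  have hlow := abs_lower (2*(cN a b : ℝ) * T m) hx hdd
  have hlow2 : 4*T m - 2*A m ≤ |2*W + (d1 + d2)| := by
    have h2 : 4*T m ≤ 2*(cN a b : ℝ) * T m := by nlinarith [hc2, hTpos]
    linarith
  -- dy difference
  have hfac : (W + d1)^2 - (W + d2)^2 = (d1 - d2) * (2*W + (d1 + d2)) := by ring
  have hsep' : gam m ≤ |d1 - d2| := by rw [hd1, hd2]; exact hsep
  have hdabs : |(W + d1)^2 - (W + d2)^2| ≥ gam m * (4*T m - 2*A m) := by
    rw [hfac, abs_mul]
    apply mul_le_mul hsep' hlow2 (by linarith [A_pos m]) (abs_nonneg _)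
  -- dx difference small
  have hx1 := xc_gap b1 c1 b2 c2
  have hx2 := xc_gap b3 c3 b4 c4
  have e1 : (xc K k1 t1 - xc K k2 t2)^2 ≤ (m:ℝ)^2 := by
    rw [← sq_abs]; exact pow_le_pow_left₀ (abs_nonneg _) hx1 2
  have e2 : (xc K k3 t3 - xc K k4 t4)^2 ≤ (m:ℝ)^2 := by
    rw [← sq_abs]; exact pow_le_pow_left₀ (abs_nonneg _) hx2 2
  have hkey := gam_mul_key (m := m) hm
  unfold dsq at heq
  rw [hy1, hy2] at heq
  have hcon : (W + d1)^2 - (W + d2)^2 = (xc K k3 t3 - xc K k4 t4)^2 - (xc K k1 t1 - xc K k2 t2)^2 := by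
    linarith
  rw [hcon] at hdabs
  rcases abs_cases ((xc K k3 t3 - xc K k4 t4)^2 - (xc K k1 t1 - xc K k2 t2)^2) with ⟨he, -⟩ | ⟨he, -⟩ <;>
    rw [he] at hdabs <;>
    nlinarith [sq_nonneg (xc K k1 t1 - xc K k2 t2), sq_nonneg (xc K k3 t3 - xc K k4 t4)]

lemma share_desig {m K k t k' t' : ℕ} (hK : m+1 ≤ K) (hk : k < m) (ht : t < K)
    (hk' : k' < m) (ht' : t' < K) (hw : win m K k t = win m K k' t')
    (hne : ¬(k = k' ∧ t = t')) :
    ∃ i j, Valid m i j ∧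
      (((k,t) = (Lk i, Lt i j) ∧ (k',t') = (Rk j, Rt m i j)) ∨
       ((k',t') = (Lk i, Lt i j) ∧ (k,t) = (Rk j, Rt m i j))) := by
  rcases win_eq_cases hK hk ht hk' ht' hw with ⟨e1, e2⟩ | ⟨hnR, hR, e1, e2⟩ | ⟨hnR, hR, e1, e2⟩
  · exact absurd ⟨e1, e2⟩ hne
  · obtain ⟨a1, a2⟩ := hR
    refine ⟨t'+k'+2-m, k'+2, ⟨by omega, by omega, by omega⟩, Or.inl ⟨?_, ?_⟩⟩
    · rw [Prod.mk.injEq]; unfold Lk Lt; omega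
    · rw [Prod.mk.injEq]; unfold Rk Rt; omega
  · obtain ⟨a1, a2⟩ := hR
    refine ⟨t+k+2-m, k+2, ⟨by omega, by omega, by omega⟩, Or.inr ⟨?_, ?_⟩⟩
    · rw [Prod.mk.injEq]; unfold Lk Lt; omega
    · rw [Prod.mk.injEq]; unfold Rk Rt; omega

lemma dsq_ne_main {m K k1 t1 k2 t2 k3 t3 k4 t4 : ℕ} (hm : 1 ≤ m) (hK : m+1 ≤ K)
    (b1 : k1 < m) (c1 : t1 < K) (b2 : k2 < m) (c2 : t2 < K)
    (b3 : k3 < m) (c3 : t3 < K) (b4 : k4 < m) (c4 : t4 < K)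
    (h12 : ¬(k1 = k2 ∧ t1 = t2)) (h34 : ¬(k3 = k4 ∧ t3 = t4))
    (hnePair : ¬(((k1,t1) = (k3,t3) ∧ (k2,t2) = (k4,t4)) ∨
                 ((k1,t1) = (k4,t4) ∧ (k2,t2) = (k3,t3)))) :
    dsq m K k1 t1 k2 t2 ≠ dsq m K k3 t3 k4 t4 := by
  push_neg at hnePair
  obtain ⟨hne1, hne2⟩ := hnePair
  rcases lt_trichotomy (cN (win m K k1 t1) (win m K k2 t2)) (cN (win m K k3 t3) (win m K k4 t4)) with hcc | hcc | hcc
  · exact ne_of_lt (dsq_lt_of_cN_lt hm b1 c1 b2 c2 b3 c3 b4 c4 hcc)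
  · by_cases hzero : win m K k1 t1 = win m K k2 t2
    · -- both designated
      have hzero' : win m K k3 t3 = win m K k4 t4 := by
        rw [← cN_zero_iff]
        rw [← hcc, cN_zero_iff.2 hzero]
      obtain ⟨i, j, hv, hor⟩ := share_desig hK b1 c1 b2 c2 hzero h12
      obtain ⟨i', j', hv', hor'⟩ := share_desig hK b3 c3 b4 c4 hzero' h34
      have hij : (i, j) ≠ (i', j') := by
        intro he
        rw [Prod.mk.injEq] at he
        obtain ⟨rfl, rfl⟩ := he
        rcases hor with ⟨o1, o2⟩ | ⟨o1, o2⟩ <;> rcases hor' with ⟨p1, p2⟩ | ⟨p1, p2⟩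
        · exact hne1 (o1.trans p1.symm) (o2.trans p2.symm)
        · exact hne2 (o1.trans p1.symm) (o2.trans p2.symm)
        · exact hne2 (o2.trans p2.symm) (o1.trans p1.symm)
        · exact hne1 (o2.trans p2.symm) (o1.trans p1.symm)
      have hd := desig_dsq_ne (K := K) hK hv hv' hij
      rcases hor with ⟨o1, o2⟩ | ⟨o1, o2⟩ <;> rcases hor' with ⟨p1, p2⟩ | ⟨p1, p2⟩ <;>
        rw [Prod.mk.injEq] at o1 o2 p1 p2 <;>
        rw [o1.1, o1.2, o2.1, o2.2, p1.1, p1.2, p2.1, p2.2]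
      · exact hd
      · rw [dsq_comm m K (Rk j') (Rt m i' j')]; exact hd
      · rw [dsq_comm m K (Rk j) (Rt m i j)]; exact hd
      · rw [dsq_comm m K (Rk j) (Rt m i j), dsq_comm m K (Rk j') (Rt m i' j')]; exact hd
    · -- same nonzero cN: windows match up
      have hzero' : ¬ win m K k3 t3 = win m K k4 t4 := by
        intro he
        apply hzero
        rw [← cN_zero_iff, hcc, cN_zero_iff.2 he]
      rcases cN_inj hzero hzero' hcc with ⟨w1, w2⟩ | ⟨w1, w2⟩
      · refine same_window_ne hm hK b1 c1 b2 c2 b3 c3 b4 c4 w1 w2 hzero ?_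
        intro hc; exact hne1 hc.1 hc.2
      · rw [dsq_comm m K k3 t3]
        refine same_window_ne hm hK b1 c1 b2 c2 b4 c4 b3 c3 w1 w2 hzero ?_
        intro hc; exact hne2 hc.1 hc.2
  · exact (ne_of_lt (dsq_lt_of_cN_lt hm b3 c3 b4 c4 b1 c1 b2 c2 hcc)).symm

lemma min_main {m K i j k t k' t' : ℕ} (hK : m+1 ≤ K) (hvij : Valid m i j)
    (hk : k < m) (ht : t < K) (hk' : k' < m) (ht' : t' < K)
    (hne : ¬(k = k' ∧ t = t'))
    (hin1 : i ≤ k + 1) (hin2 : k + 2 ≤ j) (hin1' : i ≤ k' + 1) (hin2' : k' + 2 ≤ j) :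
    dsq m K (Lk i) (Lt i j) (Rk j) (Rt m i j) ≤ dsq m K k t k' t' := by
  by_cases hw : win m K k t = win m K k' t'
  · obtain ⟨i', j', hv', hor⟩ := share_desig hK hk ht hk' ht' hw hne
    have hcont : i ≤ i' ∧ j' ≤ j := by
      obtain ⟨a1, a2, a3⟩ := hv'
      rcases hor with ⟨o1, o2⟩ | ⟨o1, o2⟩ <;> rw [Prod.mk.injEq] at o1 o2 <;>
        · constructor
          · first
            | (have := o1.1; unfold Lk at this; omega)
            | (have := o2.1; unfold Lk at this; omega)
          · first
            | (have := o1.1; unfold Rk at this; omega)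
            | (have := o2.1; unfold Rk at this; omega)
    rcases eq_or_ne (i, j) (i', j') with he | he
    · rw [Prod.mk.injEq] at he
      obtain ⟨rfl, rfl⟩ := he
      rcases hor with ⟨o1, o2⟩ | ⟨o1, o2⟩ <;> rw [Prod.mk.injEq] at o1 o2 <;>
        rw [o1.1, o1.2, o2.1, o2.2]
      exact le_of_eq (dsq_comm m K (Lk i) (Lt i j) (Rk j) (Rt m i j))
    · have hle := desig_dsq_le (K := K) hK hvij hv' hcont.1 hcont.2 he
      rcases hor with ⟨o1, o2⟩ | ⟨o1, o2⟩ <;> rw [Prod.mk.injEq] at o1 o2 <;>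
        rw [o1.1, o1.2, o2.1, o2.2]
      · exact hle
      · rw [dsq_comm m K (Rk j') (Rt m i' j')]; exact hle
  · have h1 := dsq_desig_lt_A2 (K := K) hK hvij
    have h2 := dsq_ge_A2 (K := K) (t := t) (t' := t') hk hk' hw
    linarith

lemma pt_x (m K k t : ℕ) : pt m K k t 0 = xc K k t := rfl

lemma mem_SS {m K : ℕ} {p : E} : p ∈ SS m K ↔ ∃ k t, k < m ∧ t < K ∧ p = pt m K k t := by
  classical
  unfold SS
  simp only [Finset.mem_image, Finset.mem_product, Finset.mem_range, Prod.exists]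
  constructor
  · rintro ⟨k, t, ⟨hk, ht⟩, rfl⟩; exact ⟨k, t, hk, ht, rfl⟩
  · rintro ⟨k, t, hk, ht, rfl⟩; exact ⟨k, t, ⟨hk, ht⟩, rfl⟩

lemma pt_inj {m K k t k' t' : ℕ} (ht : t < K) (ht' : t' < K)
    (h : pt m K k t = pt m K k' t') : k = k' ∧ t = t' := by
  have hx : xc K k t = xc K k' t' := congrArg (fun p : E => p 0) h
  exact xc_inj ht ht' hx

lemma pt_mem {m K k t : ℕ} (hk : k < m) (ht : t < K) : pt m K k t ∈ SS m K :=
  mem_SS.2 ⟨k, t, hk, ht, rfl⟩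

lemma SS_card (m K : ℕ) : (SS m K).card = m * K := by
  classical
  unfold SS
  rw [Finset.card_image_of_injOn, Finset.card_product, Finset.card_range, Finset.card_range]
  rintro ⟨k, t⟩ h1 ⟨k', t'⟩ h2 he
  simp only [Finset.mem_coe, Finset.mem_product, Finset.mem_range] at h1 h2
  obtain ⟨e1, e2⟩ := pt_inj h1.2 h2.2 he
  simp only [Prod.mk.injEq]
  exact ⟨e1, e2⟩

lemma dist_ne_pt {m K k1 t1 k2 t2 k3 t3 k4 t4 : ℕ} (hm : 1 ≤ m) (hK : m+1 ≤ K)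
    (b1 : k1 < m) (c1 : t1 < K) (b2 : k2 < m) (c2 : t2 < K)
    (b3 : k3 < m) (c3 : t3 < K) (b4 : k4 < m) (c4 : t4 < K)
    (h12 : pt m K k1 t1 ≠ pt m K k2 t2) (h34 : pt m K k3 t3 ≠ pt m K k4 t4)
    (hset : ({pt m K k1 t1, pt m K k2 t2} : Set E) ≠ {pt m K k3 t3, pt m K k4 t4}) :
    dist (pt m K k1 t1) (pt m K k2 t2) ≠ dist (pt m K k3 t3) (pt m K k4 t4) := by
  rw [dist_pt, dist_pt]
  rw [Ne, Real.sqrt_inj (dsq_nonneg m K k1 t1 k2 t2) (dsq_nonneg m K k3 t3 k4 t4)]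
  apply dsq_ne_main hm hK b1 c1 b2 c2 b3 c3 b4 c4
  · intro ⟨e1, e2⟩; exact h12 (by rw [e1, e2])
  · intro ⟨e1, e2⟩; exact h34 (by rw [e1, e2])
  · rintro (⟨e1, e2⟩ | ⟨e1, e2⟩) <;> rw [Prod.mk.injEq] at e1 e2 <;> apply hset
    · rw [e1.1, e1.2, e2.1, e2.2]
    · rw [e1.1, e1.2, e2.1, e2.2]
      exact Set.pair_comm _ _

lemma slab_eq' {K k t i : ℕ} (ht : t < K) (h1 : (i:ℝ) ≤ xc K k t) (h2 : xc K k t ≤ (i:ℝ)+1) :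
    k + 1 = i := by
  obtain ⟨b1, b2⟩ := xc_bounds ht
  have e1 : (i:ℝ) < (k:ℝ)+2 := lt_of_le_of_lt h1 b2
  have e2 : (k:ℝ)+1 < (i:ℝ)+1 := lt_of_lt_of_le b1 h2
  have n1 : i < k+2 := by exact_mod_cast (by push_cast; linarith : (i:ℝ) < ((k+2:ℕ):ℝ))
  have n2 : k+1 < i+1 := by exact_mod_cast (by push_cast; linarith : ((k+1:ℕ):ℝ) < ((i+1:ℕ):ℝ))
  omega

lemma slab_in {m K k t i j : ℕ} (ht : t < K) (h1 : (i:ℝ) ≤ xc K k t) (h2 : xc K k t ≤ (j:ℝ)) :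
    i ≤ k + 1 ∧ k + 2 ≤ j := by
  obtain ⟨b1, b2⟩ := xc_bounds ht
  have e1 : (i:ℝ) < (k:ℝ)+2 := lt_of_le_of_lt h1 b2
  have e2 : (k:ℝ)+1 < (j:ℝ) := lt_of_lt_of_le b1 h2
  have n1 : i < k+2 := by exact_mod_cast (by push_cast; linarith : (i:ℝ) < ((k+2:ℕ):ℝ))
  have n2 : k+1 < j := by exact_mod_cast (by push_cast; linarith : ((k+1:ℕ):ℝ) < (j:ℝ))
  omega

end S19

end
open S19 in
theorem stmt_19 (n m : ℕ) (hm : 0 < m) (hdvd : m ∣ n) (hnm : m * (m + 1) ≤ n) :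
    ∃ S : Finset (EuclideanSpace ℝ (Fin 2)),
      S.card = n ∧
      (∀ p ∈ S, ∀ q ∈ S, p ≠ q → p 0 ≠ q 0) ∧
      (∀ p ∈ S, ∀ q ∈ S, ∀ p' ∈ S, ∀ q' ∈ S, p ≠ q → p' ≠ q' →
        ({p, q} : Set (EuclideanSpace ℝ (Fin 2))) ≠ {p', q'} → dist p q ≠ dist p' q') ∧
      (∀ i : ℕ, 1 ≤ i → i ≤ m →
        Nat.card {p : EuclideanSpace ℝ (Fin 2) |
          p ∈ S ∧ (i : ℝ) < p 0 ∧ p 0 < (i : ℝ) + 1} = n / m) ∧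
      ∃ P : ℕ → ℕ → Set (EuclideanSpace ℝ (Fin 2)),
        (∀ i j : ℕ, 1 ≤ i → i < j → j ≤ m + 1 →
          ∃ p ∈ S, ∃ q ∈ S, p ≠ q ∧ P i j = {p, q} ∧
            (i : ℝ) ≤ p 0 ∧ p 0 ≤ (j : ℝ) ∧ (i : ℝ) ≤ q 0 ∧ q 0 ≤ (j : ℝ) ∧
            ∀ r ∈ S, ∀ t ∈ S, r ≠ t →
              (i : ℝ) ≤ r 0 → r 0 ≤ (j : ℝ) → (i : ℝ) ≤ t 0 → t 0 ≤ (j : ℝ) →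
              dist p q ≤ dist r t) ∧
        (∀ i j i' j' : ℕ, 1 ≤ i → i < j → j ≤ m + 1 → 1 ≤ i' → i' < j' → j' ≤ m + 1 →
          (i, j) ≠ (i', j') → P i j ≠ P i' j') := by
  classical
  set K := n / m with hKdef
  have hm1 : 1 ≤ m := hm
  have hn : m * K = n := Nat.mul_div_cancel' hdvd
  have hK : m + 1 ≤ K := by
    have h2 : m * (m+1) ≤ m * K := by rw [hn]; exact hnm
    exact Nat.le_of_mul_le_mul_left h2 hm
  refine ⟨SS m K, (SS_card m K).trans hn, ?_, ?_, ?_, ?_⟩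
  · -- distinct x coordinates
    intro p hp q hq hne
    obtain ⟨k, t, hk, ht, rfl⟩ := mem_SS.1 hp
    obtain ⟨k', t', hk', ht', rfl⟩ := mem_SS.1 hq
    rw [pt_x, pt_x]
    intro hxeq
    obtain ⟨e1, e2⟩ := xc_inj ht ht' hxeq
    exact hne (by rw [e1, e2])
  · -- distinct distances
    intro p hp q hq p' hp' q' hq' hpq hpq' hset
    obtain ⟨k1, t1, b1, c1, rfl⟩ := mem_SS.1 hp
    obtain ⟨k2, t2, b2, c2, rfl⟩ := mem_SS.1 hq
    obtain ⟨k3, t3, b3, c3, rfl⟩ := mem_SS.1 hp'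
    obtain ⟨k4, t4, b4, c4, rfl⟩ := mem_SS.1 hq'
    exact dist_ne_pt hm1 hK b1 c1 b2 c2 b3 c3 b4 c4 hpq hpq' hset
  · -- slab counts
    intro i h1i h2i
    have hset : {p : E | p ∈ SS m K ∧ (i:ℝ) < p 0 ∧ p 0 < (i:ℝ)+1}
        = (((Finset.range K).image (fun t => pt m K (i-1) t) : Finset E) : Set E) := by
      ext p
      simp only [Set.mem_setOf_eq, Finset.coe_image, Set.mem_image, Finset.mem_coe,
        Finset.mem_range]
      constructor
      · rintro ⟨hp, hx1, hx2⟩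
        obtain ⟨k, t, hk, ht, rfl⟩ := mem_SS.1 hp
        rw [pt_x] at hx1 hx2
        have hk1 : k + 1 = i := slab_eq' ht hx1.le hx2.le
        exact ⟨t, ht, by rw [show i - 1 = k by omega]⟩
      · rintro ⟨t, ht, rfl⟩
        have hb := xc_bounds (k := i-1) ht
        have hcast : ((i-1:ℕ):ℝ) = (i:ℝ)-1 := by
          rw [Nat.cast_sub h1i]; simp
        rw [hcast] at hb
        exact ⟨pt_mem (by omega) ht, by rw [pt_x]; linarith [hb.1], by rw [pt_x]; linarith [hb.2]⟩
    rw [hset, Nat.card_coe_set_eq, Set.ncard_coe_finset,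
      Finset.card_image_of_injOn (fun t h t' h' he => by
        simpa using (pt_inj (Finset.mem_range.1 h) (Finset.mem_range.1 h') he).2),
      Finset.card_range]
  · -- the P part
    have hadj : ∀ i : ℕ, 1 ≤ i → i ≤ m → ∃ p q : E,
        (∃ tp, tp < K ∧ p = pt m K (i-1) tp) ∧ (∃ tq, tq < K ∧ q = pt m K (i-1) tq) ∧ p ≠ q ∧
        ∀ r ∈ SS m K, ∀ t ∈ SS m K, r ≠ t → (i:ℝ) ≤ r 0 → r 0 ≤ (i:ℝ)+1 →
          (i:ℝ) ≤ t 0 → t 0 ≤ (i:ℝ)+1 → dist p q ≤ dist r t := by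
      intro i h1i h2i
      set F := (SS m K).filter (fun p => (i:ℝ) ≤ p 0 ∧ p 0 ≤ (i:ℝ)+1) with hF
      have hmemF : ∀ {p : E}, p ∈ F ↔ ∃ t, t < K ∧ p = pt m K (i-1) t := by
        intro p
        rw [hF, Finset.mem_filter]
        constructor
        · rintro ⟨hp, hx1, hx2⟩
          obtain ⟨k, t, hk, ht, rfl⟩ := mem_SS.1 hp
          rw [pt_x] at hx1 hx2
          have hk1 : k + 1 = i := slab_eq' ht hx1 hx2
          exact ⟨t, ht, by rw [show i - 1 = k by omega]⟩
        · rintro ⟨t, ht, rfl⟩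
          have hb := xc_bounds (k := i-1) ht
          have hcast : ((i-1:ℕ):ℝ) = (i:ℝ)-1 := by rw [Nat.cast_sub h1i]; simp
          rw [hcast] at hb
          exact ⟨pt_mem (by omega) ht, by rw [pt_x]; linarith [hb.1], by rw [pt_x]; linarith [hb.2]⟩
      have h0 : pt m K (i-1) 0 ∈ F := hmemF.2 ⟨0, by omega, rfl⟩
      have h1 : pt m K (i-1) 1 ∈ F := hmemF.2 ⟨1, by omega, rfl⟩
      have hne01 : pt m K (i-1) 0 ≠ pt m K (i-1) 1 := by
        intro he
        have := (pt_inj (by omega) (by omega) he).2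
        omega
      have hNE : (F.offDiag).Nonempty :=
        ⟨(pt m K (i-1) 0, pt m K (i-1) 1), Finset.mem_offDiag.2 ⟨h0, h1, hne01⟩⟩
      obtain ⟨pq, hpqmem, hmin⟩ := Finset.exists_min_image F.offDiag (fun pq => dist pq.1 pq.2) hNE
      rw [Finset.mem_offDiag] at hpqmem
      obtain ⟨hp1, hp2, hp3⟩ := hpqmem
      refine ⟨pq.1, pq.2, hmemF.1 hp1, hmemF.1 hp2, hp3, ?_⟩
      intro r hr t ht hrt hx1 hx2 hx3 hx4
      exact hmin (r, t) (Finset.mem_offDiag.2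
        ⟨Finset.mem_filter.2 ⟨hr, hx1, hx2⟩, Finset.mem_filter.2 ⟨ht, hx3, hx4⟩, hrt⟩)
    choose! fa ga hfa hga hfg hminadj using hadj
    refine ⟨fun i j => if j = i+1 then {fa i, ga i} else
      {pt m K (Lk i) (Lt i j), pt m K (Rk j) (Rt m i j)}, ?_, ?_⟩
    · intro i j h1i hij hjm
      by_cases hadjc : j = i+1
      · subst hadjc
        have h2i : i ≤ m := by omega
        obtain ⟨tp, htp, hep⟩ := hfa i h1i h2i
        obtain ⟨tq, htq, heq⟩ := hga i h1i h2i
        have hcast : ((i-1:ℕ):ℝ) = (i:ℝ)-1 := by rw [Nat.cast_sub h1i]; simp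
        have hbp := xc_bounds (k := i-1) htp
        have hbq := xc_bounds (k := i-1) htq
        rw [hcast] at hbp hbq
        refine ⟨fa i, mem_SS.2 ⟨i-1, tp, by omega, htp, hep⟩,
          ga i, mem_SS.2 ⟨i-1, tq, by omega, htq, heq⟩, hfg i h1i h2i, if_pos rfl,
          ?_, ?_, ?_, ?_, ?_⟩
        · rw [hep, pt_x]; linarith [hbp.1]
        · rw [hep, pt_x]; push_cast; linarith [hbp.2]
        · rw [heq, pt_x]; linarith [hbq.1]
        · rw [heq, pt_x]; push_cast; linarith [hbq.2]
        · intro r hr t ht hrt a1 a2 a3 a4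
          push_cast at a2 a4
          exact hminadj i h1i h2i r hr t ht hrt a1 a2 a3 a4
      · have hvij : Valid m i j := ⟨h1i, by omega, hjm⟩
        obtain ⟨hLk, hLt⟩ := L_range (K := K) hK hvij
        obtain ⟨hRk, hRt⟩ := R_range (K := K) hK hvij
        have hbL := xc_bounds (k := Lk i) hLt
        have hbR := xc_bounds (k := Rk j) hRt
        have hcastL : ((Lk i:ℕ):ℝ) = (i:ℝ)-1 := by
          unfold Lk; rw [Nat.cast_sub h1i]; simp
        have hcastR : ((Rk j:ℕ):ℝ) = (j:ℝ)-2 := by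
          unfold Rk
          rw [Nat.cast_sub (by omega : 2 ≤ j)]; simp
        rw [hcastL] at hbL
        rw [hcastR] at hbR
        have hij2 : (i:ℝ)+2 ≤ (j:ℝ) := by
          have : i+2 ≤ j := by omega
          exact_mod_cast this
        have hptne : pt m K (Lk i) (Lt i j) ≠ pt m K (Rk j) (Rt m i j) := by
          intro he
          have h2 := (pt_inj hLt hRt he).1
          unfold Lk Rk at h2
          omega
        refine ⟨pt m K (Lk i) (Lt i j), pt_mem hLk hLt,
          pt m K (Rk j) (Rt m i j), pt_mem hRk hRt, hptne, if_neg hadjc,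
          ?_, ?_, ?_, ?_, ?_⟩
        · rw [pt_x]; linarith [hbL.1]
        · rw [pt_x]; linarith [hbL.2]
        · rw [pt_x]; linarith [hbR.1]
        · rw [pt_x]; linarith [hbR.2]
        · intro r hr t ht hrt a1 a2 a3 a4
          obtain ⟨k, u, hk, hu, rfl⟩ := mem_SS.1 hr
          obtain ⟨k', u', hk', hu', rfl⟩ := mem_SS.1 ht
          rw [pt_x] at a1 a2 a3 a4
          obtain ⟨c1, c2⟩ := slab_in (m := m) hu a1 a2
          obtain ⟨c3, c4⟩ := slab_in (m := m) hu' a3 a4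
          have hneidx : ¬(k = k' ∧ u = u') := by
            intro ⟨e1, e2⟩; exact hrt (by rw [e1, e2])
          have hd := min_main hK hvij hk hu hk' hu' hneidx c1 c2 c3 c4
          rw [dist_pt, dist_pt]
          exact Real.sqrt_le_sqrt hd
    · intro i j i' j' h1i hij hjm h1i' hij' hjm' hnePair
      by_cases ha : j = i+1 <;> by_cases ha' : j' = i'+1 <;>
        simp only [if_pos, if_neg, ha, ha'] <;> intro hSeq
      · -- both adjacent
        subst ha; subst ha'
        have hii' : i ≠ i' := by
          intro he; exact hnePair (by rw [he])
        obtain ⟨tp, htp, hep⟩ := hfa i h1i (by omega)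
        obtain ⟨tq, htq, heq⟩ := hga i h1i (by omega)
        obtain ⟨tp', htp', hep'⟩ := hfa i' h1i' (by omega)
        obtain ⟨tq', htq', heq'⟩ := hga i' h1i' (by omega)
        rw [hep, heq, hep', heq'] at hSeq
        rcases Set.pair_eq_pair_iff.1 hSeq with ⟨e1, -⟩ | ⟨e1, -⟩ <;>
        · have := (pt_inj htp (by assumption) e1).1
          omega
      · -- adjacent vs non-adjacent
        subst ha
        have hvij' : Valid m i' j' := ⟨h1i', by omega, hjm'⟩
        obtain ⟨hLk', hLt'⟩ := L_range (K := K) hK hvij'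
        obtain ⟨hRk', hRt'⟩ := R_range (K := K) hK hvij'
        obtain ⟨tp, htp, hep⟩ := hfa i h1i (by omega)
        obtain ⟨tq, htq, heq⟩ := hga i h1i (by omega)
        rw [hep, heq] at hSeq
        rcases Set.pair_eq_pair_iff.1 hSeq with ⟨e1, e2⟩ | ⟨e1, e2⟩
        · have k1 := (pt_inj htp hLt' e1).1
          have k2 := (pt_inj htq hRt' e2).1
          simp only [Lk, Rk] at k1 k2
          omega
        · have k1 := (pt_inj htp hRt' e1).1
          have k2 := (pt_inj htq hLt' e2).1
          simp only [Lk, Rk] at k1 k2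
          omega
      · -- non-adjacent vs adjacent
        subst ha'
        have hvij : Valid m i j := ⟨h1i, by omega, hjm⟩
        obtain ⟨hLk, hLt⟩ := L_range (K := K) hK hvij
        obtain ⟨hRk, hRt⟩ := R_range (K := K) hK hvij
        obtain ⟨tp, htp, hep⟩ := hfa i' h1i' (by omega)
        obtain ⟨tq, htq, heq⟩ := hga i' h1i' (by omega)
        rw [hep, heq] at hSeq
        rcases Set.pair_eq_pair_iff.1 hSeq with ⟨e1, e2⟩ | ⟨e1, e2⟩
        · have k1 := (pt_inj hLt htp e1).1
          have k2 := (pt_inj hRt htq e2).1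
          simp only [Lk, Rk] at k1 k2
          omega
        · have k1 := (pt_inj hLt htq e1).1
          have k2 := (pt_inj hRt htp e2).1
          simp only [Lk, Rk] at k1 k2
          omega
      · -- both non-adjacent
        have hvij : Valid m i j := ⟨h1i, by omega, hjm⟩
        have hvij' : Valid m i' j' := ⟨h1i', by omega, hjm'⟩
        obtain ⟨hLk, hLt⟩ := L_range (K := K) hK hvij
        obtain ⟨hRk, hRt⟩ := R_range (K := K) hK hvij
        obtain ⟨hLk', hLt'⟩ := L_range (K := K) hK hvij'
        obtain ⟨hRk', hRt'⟩ := R_range (K := K) hK hvij'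
        rcases Set.pair_eq_pair_iff.1 hSeq with ⟨e1, e2⟩ | ⟨e1, e2⟩
        · obtain ⟨k1, k2⟩ := pt_inj hLt hLt' e1
          obtain ⟨k3, k4⟩ := pt_inj hRt hRt' e2
          simp only [Lk, Lt, Rk, Rt] at k1 k2 k3 k4
          obtain ⟨q1, q2, q3⟩ := hvij
          obtain ⟨q1', q2', q3'⟩ := hvij'
          exact hnePair (by rw [Prod.mk.injEq]; omega)
        · obtain ⟨k1, k2⟩ := pt_inj hLt hRt' e1
          obtain ⟨k3, k4⟩ := pt_inj hRt hLt' e2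
          simp only [Lk, Lt, Rk, Rt] at k1 k2 k3 k4
          obtain ⟨q1, q2, q3⟩ := hvij
          obtain ⟨q1', q2', q3'⟩ := hvij'
          omega
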